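/- For all natural numbers k: Σ_{j=0}^{k} C(2k,2j) · 5^j · (2j-1)!! · (2k-2j-1)!! = (2k)! · 3^k / k!. -/

import Mathlib

open Finset

lemma df_aux (j : ℕ) : (Nat.doubleFactorial (2 * j - 1) : ℚ) = ((2 * j).factorial : ℚ) / (2 ^ j * (j.factorial : ℚ)) := by
  have h2 : (2:ℚ) ^ j * (j.factorial : ℚ) ≠ 0 := by positivity
  rw [eq_div_iff h2]
  cases j with
  | zero => simp [Nat.doubleFactorial]
  | succ n =>
    have h : (2 * (n + 1)).factorial = (2 * n + 1).doubleFactorial * (2 ^ (n+1) * (n+1).factorial) := by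
      have := Nat.factorial_eq_mul_doubleFactorial (2 * n + 1)
      rw [show 2 * n + 1 + 1 = 2 * (n + 1) by ring] at this
      rw [this, Nat.doubleFactorial_two_mul]
      ring
    have hsub : 2 * (n + 1) - 1 = 2 * n + 1 := by omega
    rw [hsub]
    push_cast [h]
    ring

theorem stmt_5 (k : ℕ) :
    ∑ j ∈ range (k + 1),
        ((2 * k).choose (2 * j) : ℚ) * 5 ^ j * (Nat.doubleFactorial (2 * j - 1) : ℚ) *
          (Nat.doubleFactorial (2 * k - 2 * j - 1) : ℚ) =
      ((2 * k).factorial : ℚ) * 3 ^ k / (k.factorial : ℚ) := by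
  have key : ∀ j ∈ range (k + 1),
      ((2 * k).choose (2 * j) : ℚ) * 5 ^ j * (Nat.doubleFactorial (2 * j - 1) : ℚ) *
          (Nat.doubleFactorial (2 * k - 2 * j - 1) : ℚ)
        = ((2 * k).factorial : ℚ) / (2 ^ k * (k.factorial : ℚ)) * ((k.choose j : ℚ) * 5 ^ j) := by
    intro j hj
    rw [mem_range] at hj
    have hjk : j ≤ k := by omega
    have h1 : 2 * k - 2 * j = 2 * (k - j) := by omega
    rw [h1, df_aux, df_aux]
    have hc : ((2 * k).choose (2 * j) : ℚ) = ((2*k).factorial : ℚ) / ((2*j).factorial * ((2*k-2*j)).factorial) := by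
      rw [Nat.cast_choose ℚ (by omega : 2*j ≤ 2*k)]
    rw [h1] at hc
    rw [hc, Nat.cast_choose ℚ hjk]
    have e1 : ((2*j).factorial : ℚ) ≠ 0 := by positivity
    have e2 : ((2*(k-j)).factorial : ℚ) ≠ 0 := by positivity
    have e3 : (j.factorial : ℚ) ≠ 0 := by positivity
    have e4 : ((k-j).factorial : ℚ) ≠ 0 := by positivity
    have e5 : (k.factorial : ℚ) ≠ 0 := by positivity
    have hpow : (2:ℚ) ^ j * 2 ^ (k - j) = 2 ^ k := by
      rw [← pow_add]; congr 1; omega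
    field_simp
    rw [← hpow]
  rw [Finset.sum_congr rfl key, ← Finset.mul_sum]
  have hbin : ∑ j ∈ range (k + 1), ((k.choose j : ℚ) * 5 ^ j) = 6 ^ k := by
    have := add_pow (5:ℚ) 1 k
    simp only [one_pow, mul_one] at this
    rw [show (6:ℚ) = 5 + 1 by norm_num, this]
    exact Finset.sum_congr rfl fun j _ => by ring
  rw [hbin]
  have e5 : (k.factorial : ℚ) ≠ 0 := by positivity
  have h6 : (6:ℚ)^k = 2^k * 3^k := by rw [← mul_pow]; norm_num
  field_simp [h6]
  ring
  exact h6
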